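/- Let n ≥ 1, let a ∈ Matrix n n ℂ be Hermitian (aᴴ = a), and let σ ∈ ℂ. There exists a twice differentiable function φ : ℝ → ℂⁿ, not identically zero, satisfying φ''(x) = a·φ(x) + σ²·φ(x) for all x ∈ ℝ and φ(0) = φ(π) = 0, if and only if there exist k ∈ ℕ with k ≥ 1 and an eigenvalue μ of a (i.e. a·v = μ·v for some nonzero v ∈ ℂⁿ) such that μ + σ² + k² = 0. -/

import Mathlib

open Complex

/-- Uniqueness for the second-order linear ODE ψ'' = l ψ. -/
lemma ode2_unique (l : ℂ) (f g f' g' : ℝ → ℂ)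
    (hf : ∀ t, HasDerivAt f (f' t) t) (hf' : ∀ t, HasDerivAt f' (l * f t) t)
    (hg : ∀ t, HasDerivAt g (g' t) t) (hg' : ∀ t, HasDerivAt g' (l * g t) t)
    (h0 : f 0 = g 0) (h0' : f' 0 = g' 0) : ∀ x, f x = g x := by
  intro x
  set L : (ℂ × ℂ) →L[ℂ] (ℂ × ℂ) :=
    (ContinuousLinearMap.snd ℂ ℂ ℂ).prod (l • ContinuousLinearMap.fst ℂ ℂ ℂ) with hL
  have key : Set.EqOn (fun t => (f t, f' t)) (fun t => (g t, g' t))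
      (Set.Ioo (-(|x|+1)) (|x|+1)) := by
    apply ODE_solution_unique_of_mem_Ioo (v := fun _ p => L p) (s := fun _ => Set.univ)
      (K := ‖L‖₊) (t₀ := 0)
    · intro t _
      exact L.lipschitz.lipschitzOnWith
    · constructor
      · nlinarith [abs_nonneg x]
      · nlinarith [abs_nonneg x]
    · intro t _
      refine ⟨?_, trivial⟩
      have := (hf t).prodMk (hf' t)
      exact this
    · intro t _
      refine ⟨?_, trivial⟩
      have := (hg t).prodMk (hg' t)
      exact this
    · simp [h0, h0']
  have hx : x ∈ Set.Ioo (-(|x|+1)) (|x|+1) := by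
    constructor
    · nlinarith [abs_nonneg x, neg_abs_le x]
    · nlinarith [le_abs_self x]
  exact congrArg Prod.fst (key hx)

lemma hasDerivAt_cexp_mul (w : ℂ) (x : ℝ) :
    HasDerivAt (fun t : ℝ => Complex.exp (w * t)) (w * Complex.exp (w * x)) x := by
  have h1 : HasDerivAt (fun z : ℂ => Complex.exp (w * z)) (w * Complex.exp (w * x)) (x : ℂ) := by
    have := (Complex.hasDerivAt_exp (w * x)).comp (x : ℂ) ((hasDerivAt_id (x : ℂ)).const_mul w)
    simpa [mul_comm, Function.comp_def] using this
  exact h1.comp_ofReal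

/-- Scalar Dirichlet problem: ψ'' = l ψ, ψ(0)=ψ(π)=0, ψ not identically 0 forces l = -k². -/
lemma scalar_dirichlet (l : ℂ) (ψ ψ' : ℝ → ℂ)
    (hψ : ∀ t, HasDerivAt ψ (ψ' t) t) (hψ' : ∀ t, HasDerivAt ψ' (l * ψ t) t)
    (h0 : ψ 0 = 0) (hπ : ψ Real.pi = 0) (hne : ∃ x, ψ x ≠ 0) :
    ∃ k : ℕ, 1 ≤ k ∧ l + (k : ℂ) ^ 2 = 0 := by
  obtain ⟨x₀, hx₀⟩ := hne
  set c := ψ' 0 with hc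
  -- c ≠ 0
  have hcne : c ≠ 0 := by
    intro h
    have := ode2_unique l ψ (fun _ => 0) ψ' (fun _ => 0) hψ
      hψ' (fun t => hasDerivAt_const t 0) (fun t => by simpa using hasDerivAt_const t (0:ℂ))
      (by simpa using h0) (by simpa using h)
    exact hx₀ (this x₀)
  by_cases hl : l = 0
  · -- ψ = c x, contradiction with ψ π = 0
    exfalso
    have heq := ode2_unique l ψ (fun t : ℝ => c * t) ψ' (fun _ => c) hψ hψ'
      (fun t => by simpa using (Complex.ofRealCLM.hasDerivAt (x := t)).const_mul c)
      (fun t => by simpa [hl] using hasDerivAt_const t c)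
      (by simpa using h0) rfl
    have := heq Real.pi
    rw [hπ] at this
    have : c = 0 := by
      field_simp at this
      rcases mul_eq_zero.mp this.symm with h | h
      · exact h
      · exact absurd (Complex.ofReal_eq_zero.mp h) Real.pi_ne_zero
    exact hcne this
  · obtain ⟨w, hw⟩ := IsAlgClosed.exists_pow_nat_eq (k := ℂ) l (n := 2) (by norm_num)
    have hwne : w ≠ 0 := by rintro rfl; simp at hw; exact hl hw.symm
    set d := c / (2 * w) with hd
    set f : ℝ → ℂ := fun x => d * (Complex.exp (w * x) - Complex.exp (-w * x)) with hfdef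
    set f' : ℝ → ℂ := fun x => d * (w * Complex.exp (w * x) + w * Complex.exp (-w * x)) with hf'def
    have hf : ∀ t, HasDerivAt f (f' t) t := by
      intro t
      have := (((hasDerivAt_cexp_mul w t).sub (hasDerivAt_cexp_mul (-w) t)).const_mul d)
      refine this.congr_deriv ?_
      simp only [hf'def]
      ring
    have hf' : ∀ t, HasDerivAt f' (l * f t) t := by
      intro t
      have := (((hasDerivAt_cexp_mul w t).const_mul w).add
        ((hasDerivAt_cexp_mul (-w) t).const_mul w)).const_mul d
      refine this.congr_deriv ?_
      have hlw : l = w ^ 2 := hw.symm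
      simp only [hfdef, hlw]
      ring
    have hf0 : f' 0 = c := by
      simp only [hf'def, Complex.ofReal_zero, mul_zero, neg_zero, Complex.exp_zero, mul_one, hd]
      field_simp
      ring
    have heq := ode2_unique l ψ f ψ' f' hψ hψ' hf hf'
      (by simp [h0, hfdef]) hf0.symm
    have hpi := heq Real.pi
    rw [hπ] at hpi
    have hdne : d ≠ 0 := by
      simp [hd]
      exact ⟨hcne, hwne⟩
    have hexp : Complex.exp (w * Real.pi) = Complex.exp (-w * Real.pi) := by
      have := hpi.symm
      rw [hfdef] at this
      simp only at this
      rcases mul_eq_zero.mp this with h | h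
      · exact absurd h hdne
      · linear_combination h
    obtain ⟨m, hm⟩ := Complex.exp_eq_exp_iff_exists_int.mp hexp
    -- w π = -w π + m 2π i  ⇒  w = m i
    have hπc : (Real.pi : ℂ) ≠ 0 := Complex.ofReal_ne_zero.mpr Real.pi_ne_zero
    have hwm : w = m * Complex.I := by
      have h2 : (2 * (Real.pi : ℂ)) * w = (2 * (Real.pi : ℂ)) * ((m : ℂ) * Complex.I) := by
        linear_combination hm
      exact mul_left_cancel₀ (mul_ne_zero two_ne_zero hπc) h2
    have hmne : m ≠ 0 := by rintro rfl; simp at hwm; exact hwne hwm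
    refine ⟨m.natAbs, by omega, ?_⟩
    have : l = w ^ 2 := hw.symm
    rw [this, hwm]
    have hcast : ((m.natAbs : ℂ)) ^ 2 = (m : ℂ) ^ 2 := by
      have h1 : ((m.natAbs : ℤ) * (m.natAbs : ℤ) : ℤ) = m * m := Int.natAbs_mul_self
      have h2 : ((m.natAbs : ℂ)) * ((m.natAbs : ℂ)) = (m : ℂ) * (m : ℂ) := by
        rw [show ((m.natAbs : ℂ)) = ((m.natAbs : ℤ) : ℂ) from (Int.cast_natCast m.natAbs).symm,
          ← Int.cast_mul, h1, Int.cast_mul]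
      rw [sq, sq, h2]
    rw [hcast, mul_pow, Complex.I_sq]
    ring

lemma hasDerivAt_csin_mul (c : ℂ) (x : ℝ) :
    HasDerivAt (fun t : ℝ => Complex.sin (c * t)) (c * Complex.cos (c * x)) x := by
  have h1 : HasDerivAt (fun z : ℂ => Complex.sin (c * z)) (c * Complex.cos (c * x)) (x : ℂ) := by
    have := (Complex.hasDerivAt_sin (c * x)).comp (x : ℂ) ((hasDerivAt_id (x : ℂ)).const_mul c)
    simpa [mul_comm, Function.comp_def] using this
  exact h1.comp_ofReal

lemma hasDerivAt_ccos_mul (c : ℂ) (x : ℝ) :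
    HasDerivAt (fun t : ℝ => Complex.cos (c * t)) (-(c * Complex.sin (c * x))) x := by
  have h1 : HasDerivAt (fun z : ℂ => Complex.cos (c * z)) (-(c * Complex.sin (c * x))) (x : ℂ) := by
    have := (Complex.hasDerivAt_cos (c * x)).comp (x : ℂ) ((hasDerivAt_id (x : ℂ)).const_mul c)
    · exact this.congr_deriv (by ring)
  exact h1.comp_ofReal

/-- the Dirichlet problem `φ'' = (a + σ²)φ` on `[0,π]` for a Hermitian matrix
`a` has a nontrivial solution iff `μ + σ² + k² = 0` for some eigenvalue `μ` of `a` and some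
integer `k ≥ 1`. -/
theorem statement17 (n : ℕ) (hn : 1 ≤ n) (a : Matrix (Fin n) (Fin n) ℂ)
    (ha : a.conjTranspose = a) (σ : ℂ) :
    (∃ φ : ℝ → (Fin n → ℂ), Differentiable ℝ φ ∧ Differentiable ℝ (deriv φ) ∧
      (∀ x : ℝ, deriv (deriv φ) x = a.mulVec (φ x) + σ ^ 2 • φ x) ∧
      (∃ x : ℝ, φ x ≠ 0) ∧ φ 0 = 0 ∧ φ Real.pi = 0)
    ↔ ∃ (k : ℕ) (μ : ℂ), 1 ≤ k ∧ (∃ v : Fin n → ℂ, v ≠ 0 ∧ a.mulVec v = μ • v) ∧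
      μ + σ ^ 2 + (k : ℂ) ^ 2 = 0 := by
  constructor
  · rintro ⟨φ, hφd, hφd', hode, ⟨x₀, hx₀⟩, h0, hπ⟩
    have hA : a.IsHermitian := ha
    set B := hA.eigenvectorBasis with hB
    -- find an eigenbasis component where φ x₀ has a nonzero coefficient
    have hex : ∃ i : Fin n, (inner ℂ (B i) ((WithLp.equiv 2 _).symm (φ x₀)) : ℂ) ≠ 0 := by
      by_contra h
      push_neg at h
      have : B.repr ((WithLp.equiv 2 (Fin n → ℂ)).symm (φ x₀)) = 0 := by
        ext i
        rw [B.repr_apply_apply]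
        simpa using h i
      have h2 : ((WithLp.equiv 2 (Fin n → ℂ)).symm (φ x₀)) = 0 := by
        have := B.repr.injective (this.trans (map_zero _).symm)
        simpa using this
      apply hx₀
      simpa using congrArg (WithLp.equiv 2 (Fin n → ℂ)) h2
    obtain ⟨i, hi⟩ := hex
    set v : Fin n → ℂ := ⇑(B i) with hv
    have hvev : a.mulVec v = ((hA.eigenvalues i : ℂ)) • v := by
      rw [hv, hA.mulVec_eigenvectorBasis i]
      ext j
      simp [Complex.real_smul, hB]
    set l : ℂ := (hA.eigenvalues i : ℂ) + σ ^ 2 with hl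
    -- the scalar function ψ
    set L : (Fin n → ℂ) →L[ℂ] ℂ :=
      LinearMap.toContinuousLinearMap
        { toFun := fun u => dotProduct (star v) u
          map_add' := fun u w => dotProduct_add _ _ _
          map_smul' := fun c u => by simpa using dotProduct_smul c (star v) u } with hLdef
    set L' : (Fin n → ℂ) →L[ℝ] ℂ := L.restrictScalars ℝ with hL'def
    set ψ : ℝ → ℂ := fun x => L (φ x) with hψdef
    set ψ' : ℝ → ℂ := fun x => L (deriv φ x) with hψ'def
    have hψ : ∀ t, HasDerivAt ψ (ψ' t) t := by
      intro t
      exact (L'.hasFDerivAt (x := φ t)).comp_hasDerivAt t (hφd t).hasDerivAt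
    have hLmul : ∀ u : Fin n → ℂ, L (a.mulVec u) = (hA.eigenvalues i : ℂ) * L u := by
      intro u
      have h1 : L (a.mulVec u) = dotProduct (Matrix.vecMul (star v) a) u := by
        simp [hLdef, Matrix.dotProduct_mulVec]
      have h2 : Matrix.vecMul (star v) a = ((hA.eigenvalues i : ℂ)) • star v := by
        have := congrArg star hvev
        rw [Matrix.star_mulVec, ha] at this
        rw [this]
        ext j
        simp [Complex.conj_ofReal]
      rw [h1, h2, smul_dotProduct]
      simp [hLdef]
    have hψ' : ∀ t, HasDerivAt ψ' (l * ψ t) t := by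
      intro t
      have h1 := (L'.hasFDerivAt (x := deriv φ t)).comp_hasDerivAt t (hφd' t).hasDerivAt
      have h2 : L (deriv (deriv φ) t) = l * ψ t := by
        rw [hode t, map_add, hLmul, map_smul]
        simp [hl, hψdef]
        ring
      rw [← h2]
      exact h1
    have hψ0 : ψ 0 = 0 := by simp [hψdef, h0]
    have hψπ : ψ Real.pi = 0 := by simp [hψdef, hπ]
    have hψne : ∃ x, ψ x ≠ 0 := by
      refine ⟨x₀, ?_⟩
      have : (inner ℂ (B i) ((WithLp.equiv 2 (Fin n → ℂ)).symm (φ x₀)) : ℂ)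
          = dotProduct (star v) (φ x₀) := by
        rw [EuclideanSpace.inner_eq_star_dotProduct, dotProduct_comm]
        rfl
      rw [this] at hi
      simpa [hψdef, hLdef] using hi
    obtain ⟨k, hk1, hkl⟩ := scalar_dirichlet l ψ ψ' hψ hψ' hψ0 hψπ hψne
    refine ⟨k, (hA.eigenvalues i : ℂ), hk1, ⟨v, ?_, hvev⟩, by linear_combination hkl⟩
    -- v ≠ 0
    intro hv0
    have hn1 : ‖B i‖ = 1 := B.orthonormal.1 i
    have : B i = 0 := by
      ext j
      simpa using congrFun hv0 j
    rw [this] at hn1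
    simp at hn1
  · rintro ⟨k, μ, hk, ⟨v, hv0, hav⟩, hμ⟩
    set c : ℂ := (k : ℂ) with hc
    set φ : ℝ → (Fin n → ℂ) := fun x => Complex.sin (c * x) • v with hφdef
    have hd1 : ∀ x : ℝ, HasDerivAt φ ((c * Complex.cos (c * x)) • v) x := fun x =>
      (hasDerivAt_csin_mul c x).smul_const v
    have hderiv1 : deriv φ = fun x : ℝ => (c * Complex.cos (c * x)) • v :=
      funext fun x => (hd1 x).deriv
    have hd2 : ∀ x : ℝ, HasDerivAt (deriv φ) ((-(c * (c * Complex.sin (c * x)))) • v) x := by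
      intro x
      rw [hderiv1]
      have := ((hasDerivAt_ccos_mul c x).const_mul c).smul_const v
      refine this.congr_deriv ?_
      congr 1
      ring
    have hderiv2 : deriv (deriv φ) = fun x : ℝ => (-(c * (c * Complex.sin (c * x)))) • v :=
      funext fun x => (hd2 x).deriv
    refine ⟨φ, fun x => (hd1 x).differentiableAt, fun x => (hd2 x).differentiableAt, ?_, ?_, ?_, ?_⟩
    · intro x
      rw [hderiv2, hφdef]
      simp only [Matrix.mulVec_smul, hav, smul_smul]
      rw [← add_smul]
      congr 1
      linear_combination (-(Complex.sin (c * x))) * hμ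
    · refine ⟨Real.pi / (2 * k), ?_⟩
      have hkr : (k : ℝ) ≠ 0 := Nat.cast_ne_zero.mpr (by omega)
      have hkc : (k : ℂ) ≠ 0 := Nat.cast_ne_zero.mpr (by omega)
      have harg : c * ((Real.pi / (2 * k) : ℝ) : ℂ) = ((Real.pi / 2 : ℝ) : ℂ) := by
        push_cast [hc]
        field_simp
      rw [hφdef]
      simp only [harg]
      rw [← Complex.ofReal_sin, Real.sin_pi_div_two]
      simpa using hv0
    · simp [hφdef]
    · have : c * ((Real.pi : ℝ) : ℂ) = ((k * Real.pi : ℝ) : ℂ) := by push_cast [hc]; ring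
      rw [hφdef]
      simp only [this, ← Complex.ofReal_sin, Real.sin_nat_mul_pi]
      simp
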